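/- Let K = 2 (so V, V* ∈ {0,1}), assume P(V = j) > 0 and P(V* = k) > 0 for j, k ∈ {0,1}, assume misclassification is nondifferential, Y is integrable, and the true regression means are E[Y · 1_{V = j}]/P(V = j) = α₀ + α₁ j for j ∈ {0,1}. Then the naive mean contrast based on the misclassified covariate satisfies (E[Y·1_{V*=1}]/P(V*=1)) − (E[Y·1_{V*=0}]/P(V*=0)) = α₁ (q₁₁ − q₀₁). Consequently, if 0 < q₁₁ − q₀₁ < 1 and α₁ ≠ 0, the naive contrast has the same sign as α₁ and strictly smaller absolute value than |α₁| (attenuation bias of the naive analysis). -/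

import Mathlib

open MeasureTheory

lemma key_cond_integral {Ω : Type*} [MeasurableSpace Ω] (μ : Measure Ω) [IsProbabilityMeasure μ]
    (Y : Ω → ℝ) (hY : Measurable Y) (hYint : Integrable Y μ)
    (S T : Set Ω) (hS : MeasurableSet S) (hT : MeasurableSet T) (hTpos : μ T ≠ 0)
    (h : ∀ A : Set ℝ, MeasurableSet A →
      (μ (Y ⁻¹' A ∩ S)).toReal * (μ T).toReal = (μ (Y ⁻¹' A ∩ T)).toReal * (μ S).toReal) :
    ∫ ω in S, Y ω ∂μ = ((μ S).toReal / (μ T).toReal) * ∫ ω in T, Y ω ∂μ := by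
  have hmap : (μ.restrict S).map Y = (μ S / μ T) • ((μ.restrict T).map Y) := by
    ext A hA
    rw [Measure.map_apply hY hA, Measure.smul_apply, Measure.map_apply hY hA,
      μ.restrict_apply (hY hA), μ.restrict_apply (hY hA)]
    have hmul : μ (Y ⁻¹' A ∩ S) * μ T = μ (Y ⁻¹' A ∩ T) * μ S := by
      have h1 : (μ (Y ⁻¹' A ∩ S) * μ T).toReal = (μ (Y ⁻¹' A ∩ T) * μ S).toReal := by
        rw [ENNReal.toReal_mul, ENNReal.toReal_mul]; exact h A hA
      exact (ENNReal.toReal_eq_toReal_iff'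
        (ENNReal.mul_ne_top (measure_ne_top μ _) (measure_ne_top μ _))
        (ENNReal.mul_ne_top (measure_ne_top μ _) (measure_ne_top μ _))).mp h1
    rw [smul_eq_mul]
    calc μ (Y ⁻¹' A ∩ S) = μ (Y ⁻¹' A ∩ S) * μ T / μ T :=
          by rw [ENNReal.mul_div_right_comm, ENNReal.div_mul_cancel hTpos (measure_ne_top μ _)]
      _ = μ (Y ⁻¹' A ∩ T) * μ S / μ T := by rw [hmul]
      _ = μ S / μ T * μ (Y ⁻¹' A ∩ T) := by
          rw [div_eq_mul_inv, div_eq_mul_inv]; ring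
  have hint1 : ∫ x, x ∂((μ.restrict S).map Y) = ∫ ω in S, Y ω ∂μ :=
    integral_map hY.aemeasurable aestronglyMeasurable_id
  have hint2 : ∫ x, x ∂((μ.restrict T).map Y) = ∫ ω in T, Y ω ∂μ :=
    integral_map hY.aemeasurable aestronglyMeasurable_id
  rw [← hint1, ← hint2, hmap, integral_smul_measure, ENNReal.toReal_div, smul_eq_mul]

/-- For a binary covariate with nondifferential misclassification and true regression means
`E[Y | V = j] = α₀ + α₁ j`, the naive mean contrast based on the misclassified covariate
equals `α₁ (q₁₁ − q₀₁)`; hence, whenever `0 < q₁₁ − q₀₁ < 1` and `α₁ ≠ 0`, the naive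
contrast has the same sign as `α₁` and strictly smaller absolute value (attenuation bias). -/
theorem naive_contrast_attenuation
    {Ω : Type*} [MeasurableSpace Ω]
    (μ : Measure Ω) [IsProbabilityMeasure μ]
    (V Vstar : Ω → Fin 2) (Y : Ω → ℝ) (α₀ α₁ : ℝ)
    (hV : Measurable V) (hVstar : Measurable Vstar) (hY : Measurable Y)
    (hYint : Integrable Y μ)
    (hposV : ∀ j : Fin 2, 0 < (μ {ω | V ω = j}).toReal)
    (hposVstar : ∀ k : Fin 2, 0 < (μ {ω | Vstar ω = k}).toReal)
    (hnondiff : ∀ A : Set ℝ, MeasurableSet A → ∀ j k : Fin 2,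
      (μ (Y ⁻¹' A ∩ {ω | Vstar ω = k} ∩ {ω | V ω = j})).toReal *
          (μ {ω | V ω = j}).toReal =
        (μ (Y ⁻¹' A ∩ {ω | V ω = j})).toReal *
          (μ ({ω | Vstar ω = k} ∩ {ω | V ω = j})).toReal)
    (hmeans : ∀ j : Fin 2,
      (∫ ω in {ω | V ω = j}, Y ω ∂μ) / (μ {ω | V ω = j}).toReal
        = α₀ + α₁ * ((j : ℕ) : ℝ)) :
    -- reclassification probabilities q k j = P(V = j | V* = k)
    let q : Fin 2 → Fin 2 → ℝ := fun k j =>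
      (μ ({ω | V ω = j} ∩ {ω | Vstar ω = k})).toReal / (μ {ω | Vstar ω = k}).toReal
    -- naive mean contrast based on the misclassified covariate
    let Δ : ℝ :=
      (∫ ω in {ω | Vstar ω = 1}, Y ω ∂μ) / (μ {ω | Vstar ω = 1}).toReal -
        (∫ ω in {ω | Vstar ω = 0}, Y ω ∂μ) / (μ {ω | Vstar ω = 0}).toReal
    Δ = α₁ * (q 1 1 - q 0 1) ∧
      (0 < q 1 1 - q 0 1 → q 1 1 - q 0 1 < 1 → α₁ ≠ 0 →
        0 < Δ * α₁ ∧ |Δ| < |α₁|) := by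
  intro q Δ
  have h2 : ∀ x : Fin 2, x = 0 ∨ x = 1 := by decide
  have mV : ∀ j : Fin 2, MeasurableSet {ω | V ω = j} := fun j =>
    hV (measurableSet_singleton j)
  have mS : ∀ k : Fin 2, MeasurableSet {ω | Vstar ω = k} := fun k =>
    hVstar (measurableSet_singleton k)
  have hVne : ∀ j : Fin 2, μ {ω | V ω = j} ≠ 0 := by
    intro j h0
    simpa [h0] using hposV j
  -- integral over {V = j}
  have hIntVj : ∀ j : Fin 2, ∫ ω in {ω | V ω = j}, Y ω ∂μ
      = (α₀ + α₁ * ((j : ℕ) : ℝ)) * (μ {ω | V ω = j}).toReal := fun j =>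
    (div_eq_iff (hposV j).ne').mp (hmeans j)
  -- integral over {V = j} ∩ {V* = k}
  have hIntVjSk : ∀ k j : Fin 2,
      ∫ ω in ({ω | V ω = j} ∩ {ω | Vstar ω = k}), Y ω ∂μ
        = (μ ({ω | V ω = j} ∩ {ω | Vstar ω = k})).toReal * (α₀ + α₁ * ((j : ℕ) : ℝ)) := by
    intro k j
    have hkey := key_cond_integral μ Y hY hYint ({ω | V ω = j} ∩ {ω | Vstar ω = k})
      {ω | V ω = j} ((mV j).inter (mS k)) (mV j) (hVne j)
      (fun A hA => by
        have := hnondiff A hA j k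
        have hset : Y ⁻¹' A ∩ {ω | Vstar ω = k} ∩ {ω | V ω = j}
            = Y ⁻¹' A ∩ ({ω | V ω = j} ∩ {ω | Vstar ω = k}) := by
          rw [Set.inter_assoc]; rw [Set.inter_comm {ω | Vstar ω = k}]
        have hset2 : {ω | Vstar ω = k} ∩ {ω | V ω = j}
            = {ω | V ω = j} ∩ {ω | Vstar ω = k} := Set.inter_comm _ _
        rw [hset, hset2] at this
        exact this)
    rw [hkey, hIntVj j]
    have hp : (μ {ω | V ω = j}).toReal ≠ 0 := (hposV j).ne'
    field_simp
  -- disjointness and union decomposition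
  have hdisj : ∀ k : Fin 2, Disjoint ({ω | V ω = 0} ∩ {ω | Vstar ω = k})
      ({ω | V ω = 1} ∩ {ω | Vstar ω = k}) := by
    intro k
    apply Set.disjoint_left.mpr
    rintro ω ⟨h0, -⟩ ⟨h1, -⟩
    have : (0 : Fin 2) = 1 := by
      rw [← h0, ← h1]
    exact absurd this (by decide)
  have hsetk : ∀ k : Fin 2, {ω | Vstar ω = k}
      = ({ω | V ω = 0} ∩ {ω | Vstar ω = k}) ∪ ({ω | V ω = 1} ∩ {ω | Vstar ω = k}) := by
    intro k
    ext ω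
    simp only [Set.mem_union, Set.mem_inter_iff, Set.mem_setOf_eq]
    have := h2 (V ω)
    tauto
  -- measure decomposition
  have hq : ∀ k : Fin 2, (μ ({ω | V ω = 0} ∩ {ω | Vstar ω = k})).toReal
      + (μ ({ω | V ω = 1} ∩ {ω | Vstar ω = k})).toReal = (μ {ω | Vstar ω = k}).toReal := by
    intro k
    rw [← ENNReal.toReal_add (measure_ne_top μ _) (measure_ne_top μ _),
      ← measure_union (hdisj k) ((mV 1).inter (mS k)), ← hsetk k]
  -- integral over {V* = k}
  have hSint : ∀ k : Fin 2, ∫ ω in {ω | Vstar ω = k}, Y ω ∂μ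
      = (μ ({ω | V ω = 0} ∩ {ω | Vstar ω = k})).toReal * α₀
        + (μ ({ω | V ω = 1} ∩ {ω | Vstar ω = k})).toReal * (α₀ + α₁) := by
    intro k
    calc ∫ ω in {ω | Vstar ω = k}, Y ω ∂μ
        = ∫ ω in ({ω | V ω = 0} ∩ {ω | Vstar ω = k}) ∪ ({ω | V ω = 1} ∩ {ω | Vstar ω = k}),
            Y ω ∂μ := by rw [← hsetk k]
      _ = (∫ ω in ({ω | V ω = 0} ∩ {ω | Vstar ω = k}), Y ω ∂μ)
          + ∫ ω in ({ω | V ω = 1} ∩ {ω | Vstar ω = k}), Y ω ∂μ :=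
          setIntegral_union (hdisj k) ((mV 1).inter (mS k))
            hYint.integrableOn hYint.integrableOn
      _ = (μ ({ω | V ω = 0} ∩ {ω | Vstar ω = k})).toReal * α₀
          + (μ ({ω | V ω = 1} ∩ {ω | Vstar ω = k})).toReal * (α₀ + α₁) := by
          rw [hIntVjSk k 0, hIntVjSk k 1]; norm_num
  -- conditional means given V* = k
  have hE : ∀ k : Fin 2, (∫ ω in {ω | Vstar ω = k}, Y ω ∂μ) / (μ {ω | Vstar ω = k}).toReal
      = α₀ + α₁ * ((μ ({ω | V ω = 1} ∩ {ω | Vstar ω = k})).toReal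
        / (μ {ω | Vstar ω = k}).toReal) := by
    intro k
    rw [hSint k, div_eq_iff (hposVstar k).ne']
    have hqk := hq k
    have hsk : (μ {ω | Vstar ω = k}).toReal ≠ 0 := (hposVstar k).ne'
    field_simp
    linear_combination α₀ * hqk
  have hΔ : Δ = α₁ * (q 1 1 - q 0 1) := by
    simp only [Δ, q]
    rw [hE 1, hE 0]
    ring
  refine ⟨hΔ, fun hd1 hd2 hne => ?_⟩
  rw [hΔ]
  constructor
  · nlinarith [mul_pos (mul_self_pos.mpr hne) hd1]
  · rw [abs_mul, abs_of_pos hd1]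
    exact mul_lt_of_lt_one_right (abs_pos.mpr hne) hd2
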